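/- Every idempotent commutative semiring S (i.e., x·x = x for all x) is distributive at 0: for all congruences Θ, Φ, Ψ on S one has [0]((Θ ⊔ Φ) ⊓ Ψ) = [0]((Θ ⊓ Ψ) ⊔ (Φ ⊓ Ψ)). -/
import Mathlib


theorem stmt_13 {S : Type*} [NonUnitalCommSemiring S] (hidem : ∀ x : S, x * x = x) :
    ∀ Θ Φ Ψ : RingCon S,
      {x : S | ((Θ ⊔ Φ) ⊓ Ψ) x 0} = {x : S | ((Θ ⊓ Ψ) ⊔ (Φ ⊓ Ψ)) x 0} := by
  intro Θ Φ Ψ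
  ext x
  simp only [Set.mem_setOf_eq, RingCon.inf_iff_and]
  constructor
  · rintro ⟨hsup, hΨ⟩
    rw [RingCon.sup_eq_ringConGen] at hsup
    -- key: multiply a chain by x
    have key : ∀ y z : S, RingConGen.Rel (fun a b => Θ a b ∨ Φ a b) y z →
        ((Θ ⊓ Ψ) ⊔ (Φ ⊓ Ψ)) (y * x) (z * x) := by
      intro y z h
      induction h with
      | of a b hab =>
          have hΨab : Ψ (a * x) (b * x) := by
            have h1 : Ψ (a * x) (a * 0) := Ψ.mul (Ψ.refl a) hΨ
            have h2 : Ψ (b * x) (b * 0) := Ψ.mul (Ψ.refl b) hΨ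
            rw [mul_zero] at h1 h2
            exact Ψ.trans h1 (Ψ.symm h2)
          rcases hab with h | h
          · exact le_sup_left (α := RingCon S) (RingCon.inf_iff_and.mpr
              ⟨Θ.mul h (Θ.refl x), hΨab⟩)
          · exact le_sup_right (α := RingCon S) (RingCon.inf_iff_and.mpr
              ⟨Φ.mul h (Φ.refl x), hΨab⟩)
      | refl a => exact ((Θ ⊓ Ψ) ⊔ (Φ ⊓ Ψ)).refl _
      | symm _ ih => exact ((Θ ⊓ Ψ) ⊔ (Φ ⊓ Ψ)).symm ih
      | trans _ _ ih1 ih2 => exact ((Θ ⊓ Ψ) ⊔ (Φ ⊓ Ψ)).trans ih1 ih2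
      | add _ _ ih1 ih2 =>
          simpa only [add_mul] using ((Θ ⊓ Ψ) ⊔ (Φ ⊓ Ψ)).add ih1 ih2
      | mul _ _ ih1 ih2 =>
          have := ((Θ ⊓ Ψ) ⊔ (Φ ⊓ Ψ)).mul ih1 ih2
          have e : ∀ a b : S, a * x * (b * x) = a * b * x := by
            intro a b
            calc a * x * (b * x) = a * b * (x * x) := mul_mul_mul_comm a x b x
            _ = a * b * x := by rw [hidem]
          rwa [e, e] at this
    have := key x 0 hsup
    rwa [hidem, zero_mul] at this
  · intro h
    have h1 : ((Θ ⊓ Ψ) ⊔ (Φ ⊓ Ψ)) ≤ (Θ ⊔ Φ) ⊓ Ψ := by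
      apply sup_le
      · exact le_inf (inf_le_left.trans le_sup_left) inf_le_right
      · exact le_inf (inf_le_left.trans le_sup_right) inf_le_right
    have := h1 h
    exact RingCon.inf_iff_and.mp this
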